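/- Let φ : [0,2] → ℝ be twice continuously differentiable and let k ∈ (0,2) be such that φ''(t) < 0 for t ∈ [0,k) and φ''(t) > 0 for t ∈ (k,2]. Let β ∈ (0,1) satisfy φ(2β) − φ(β) = β·φ'(β). Then for every s ∈ [0,2β], φ(s) ≤ φ(β) + (s − β)·φ'(β). -/

import Mathlib

open Set

theorem stmt13 (φ φ' φ'' : ℝ → ℝ)
    (hd1 : ∀ t ∈ Icc (0:ℝ) 2, HasDerivWithinAt φ (φ' t) (Icc 0 2) t)
    (hd2 : ∀ t ∈ Icc (0:ℝ) 2, HasDerivWithinAt φ' (φ'' t) (Icc 0 2) t)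
    (hc : ContinuousOn φ'' (Icc (0:ℝ) 2))
    (k : ℝ) (hk : k ∈ Ioo (0:ℝ) 2)
    (hconc : ∀ t ∈ Ico (0:ℝ) k, φ'' t < 0)
    (hconv : ∀ t ∈ Ioc k 2, 0 < φ'' t)
    (β : ℝ) (hβ : β ∈ Ioo (0:ℝ) 1)
    (hβeq : φ (2 * β) - φ β = β * φ' β)
    : ∀ s ∈ Icc (0:ℝ) (2 * β), φ s ≤ φ β + (s - β) * φ' β := by
  obtain ⟨hβ0, hβ1⟩ := hβ
  obtain ⟨hk0, hk2⟩ := hk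
  set g : ℝ → ℝ := fun s => φ s - φ β - (s - β) * φ' β with hgdef
  set G : ℝ → ℝ := fun s => φ' s - φ' β with hGdef
  have hgβ : g β = 0 := by simp [hgdef]
  have hg2β : g (2 * β) = 0 := by simp only [hgdef]; linarith [hβeq]
  have hGβ : G β = 0 := by simp [hGdef]
  have hdg : ∀ t ∈ Icc (0:ℝ) 2, HasDerivWithinAt g (G t) (Icc 0 2) t := by
    intro t ht
    have h := ((hd1 t ht).sub_const (φ β)).sub
      (((hasDerivWithinAt_id t (Icc (0:ℝ) 2)).sub_const β).mul_const (φ' β))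
    simp only [one_mul] at h; exact h
  have hdG : ∀ t ∈ Icc (0:ℝ) 2, HasDerivWithinAt G (φ'' t) (Icc 0 2) t := by
    intro t ht
    exact (hd2 t ht).sub_const (φ' β)
  have hgc : ContinuousOn g (Icc (0:ℝ) 2) := fun t ht => (hdg t ht).continuousWithinAt
  have hGc : ContinuousOn G (Icc (0:ℝ) 2) := fun t ht => (hdG t ht).continuousWithinAt
  have hdga : ∀ x ∈ Ioo (0:ℝ) 2, HasDerivAt g (G x) x := fun x hx =>
    (hdg x (Ioo_subset_Icc_self hx)).hasDerivAt (Icc_mem_nhds hx.1 hx.2)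
  have hdGa : ∀ x ∈ Ioo (0:ℝ) 2, HasDerivAt G (φ'' x) x := fun x hx =>
    (hdG x (Ioo_subset_Icc_self hx)).hasDerivAt (Icc_mem_nhds hx.1 hx.2)
  -- G strictly increasing on [k, 2]
  have hGmono : StrictMonoOn G (Icc k 2) := by
    apply strictMonoOn_of_deriv_pos (convex_Icc _ _)
      (hGc.mono (Icc_subset_Icc (le_of_lt hk0) le_rfl))
    intro x hx
    rw [interior_Icc] at hx
    have hx02 : x ∈ Ioo (0:ℝ) 2 := ⟨by linarith [hx.1], hx.2⟩
    rw [(hdGa x hx02).deriv]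
    exact hconv x ⟨hx.1, le_of_lt hx.2⟩
  -- G strictly decreasing on [0, k]
  have hGanti : StrictAntiOn G (Icc 0 k) := by
    apply strictAntiOn_of_deriv_neg (convex_Icc _ _)
      (hGc.mono (Icc_subset_Icc le_rfl (le_of_lt hk2)))
    intro x hx
    rw [interior_Icc] at hx
    have hx02 : x ∈ Ioo (0:ℝ) 2 := ⟨hx.1, by linarith [hx.2]⟩
    rw [(hdGa x hx02).deriv]
    exact hconc x ⟨le_of_lt hx.1, hx.2⟩
  -- β < k
  have hβk : β < k := by
    by_contra h
    push_neg at h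
    have hmono : StrictMonoOn g (Icc β (2 * β)) := by
      apply strictMonoOn_of_deriv_pos (convex_Icc _ _)
        (hgc.mono (Icc_subset_Icc (by linarith) (by linarith)))
      intro x hx
      rw [interior_Icc] at hx
      have hx02 : x ∈ Ioo (0:ℝ) 2 := ⟨by linarith [hx.1], by linarith [hx.2]⟩
      rw [(hdga x hx02).deriv]
      have := hGmono ⟨h, by linarith⟩ ⟨by linarith [hx.1], by linarith [hx.2]⟩ hx.1
      linarith [hGβ]
    have := hmono (left_mem_Icc.mpr (by linarith)) (right_mem_Icc.mpr (by linarith))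
      (by linarith)
    rw [hgβ, hg2β] at this
    exact lt_irrefl 0 this
  -- main argument
  intro s hs
  obtain ⟨hs0, hs2β⟩ := hs
  suffices hgs : g s ≤ 0 by
    simp only [hgdef] at hgs
    linarith
  rcases le_or_gt s β with hsβ | hsβ
  · -- s ≤ β : g monotone on [0, β]
    have hmono : MonotoneOn g (Icc 0 β) := by
      apply monotoneOn_of_deriv_nonneg (convex_Icc _ _)
        (hgc.mono (Icc_subset_Icc le_rfl (by linarith)))
      · intro x hx
        rw [interior_Icc] at hx
        exact (hdga x ⟨hx.1, by linarith [hx.2]⟩).differentiableAt.differentiableWithinAt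
      · intro x hx
        rw [interior_Icc] at hx
        rw [(hdga x ⟨hx.1, by linarith [hx.2]⟩).deriv]
        have := hGanti ⟨le_of_lt hx.1, by linarith [hx.2]⟩ ⟨by linarith, le_of_lt hβk⟩ hx.2
        linarith [hGβ]
    have := hmono ⟨hs0, hsβ⟩ ⟨by linarith, le_rfl⟩ hsβ
    rw [hgβ] at this
    exact this
  · rcases le_or_gt s k with hsk | hsk
    · -- β < s ≤ k : g antitone on [β, s]
      have hanti : AntitoneOn g (Icc β s) := by
        apply antitoneOn_of_deriv_nonpos (convex_Icc _ _)
          (hgc.mono (Icc_subset_Icc (by linarith) (by linarith)))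
        · intro x hx
          rw [interior_Icc] at hx
          exact (hdga x ⟨by linarith [hx.1], by linarith [hx.2]⟩).differentiableAt.differentiableWithinAt
        · intro x hx
          rw [interior_Icc] at hx
          rw [(hdga x ⟨by linarith [hx.1], by linarith [hx.2]⟩).deriv]
          have := hGanti ⟨by linarith, le_of_lt hβk⟩ ⟨by linarith [hx.1], by linarith [hx.2]⟩ hx.1
          linarith [hGβ]
      have := hanti ⟨le_rfl, le_of_lt hsβ⟩ ⟨le_of_lt hsβ, le_rfl⟩ (le_of_lt hsβ)
      rw [hgβ] at this
      exact this
    · -- k < s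
      rcases le_or_gt (G s) 0 with hGs | hGs
      · -- g antitone on [β, s]
        have hanti : AntitoneOn g (Icc β s) := by
          apply antitoneOn_of_deriv_nonpos (convex_Icc _ _)
            (hgc.mono (Icc_subset_Icc (by linarith) (by linarith)))
          · intro x hx
            rw [interior_Icc] at hx
            exact (hdga x ⟨by linarith [hx.1], by linarith [hx.2]⟩).differentiableAt.differentiableWithinAt
          · intro x hx
            rw [interior_Icc] at hx
            rw [(hdga x ⟨by linarith [hx.1], by linarith [hx.2]⟩).deriv]
            rcases le_or_gt x k with hxk | hxk
            · have := hGanti ⟨by linarith, le_of_lt hβk⟩ ⟨by linarith [hx.1], hxk⟩ hx.1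
              linarith [hGβ]
            · have := hGmono ⟨le_of_lt hxk, by linarith [hx.2]⟩ ⟨le_of_lt hsk, by linarith⟩ hx.2
              linarith
        have := hanti ⟨le_rfl, le_of_lt hsβ⟩ ⟨le_of_lt hsβ, le_rfl⟩ (le_of_lt hsβ)
        rw [hgβ] at this
        exact this
      · -- g monotone on [s, 2β]
        have hmono : MonotoneOn g (Icc s (2 * β)) := by
          apply monotoneOn_of_deriv_nonneg (convex_Icc _ _)
            (hgc.mono (Icc_subset_Icc (by linarith) (by linarith)))
          · intro x hx
            rw [interior_Icc] at hx
            exact (hdga x ⟨by linarith [hx.1], by linarith [hx.2]⟩).differentiableAt.differentiableWithinAt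
          · intro x hx
            rw [interior_Icc] at hx
            rw [(hdga x ⟨by linarith [hx.1], by linarith [hx.2]⟩).deriv]
            have := hGmono ⟨le_of_lt hsk, by linarith⟩ ⟨by linarith [hx.1], by linarith [hx.2]⟩ hx.1
            linarith
        have := hmono ⟨le_rfl, hs2β⟩ ⟨hs2β, le_rfl⟩ hs2β
        rw [hg2β] at this
        exact this
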